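/- In ZF: if the Ehrenfeucht theory T₁ has a model whose universe X is uncountable (not equinumerous with ω), then T₁ has at least ℵ₀ pairwise non-isomorphic models with universe X. -/

import Mathlib

open FirstOrder Language

/-- The vocabulary of the Ehrenfeucht example: the order symbol together with
constants `c_n` for `n < ω`. -/
abbrev EL : FirstOrder.Language := Language.order[[ℕ]]

instance : IsOrdered EL := ⟨Sum.inl leSymb⟩

/-- The constant `c_n`, as a closed term. -/
def cT (n : ℕ) : EL.Term (Empty ⊕ Fin 0) := Constants.term (Language.order.con n)

/-- The Ehrenfeucht theory `T₁`: dense linear order without endpoints together with the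
axioms `c_n < c_{n+1}` for all `n < ω`. -/
def T1 : EL.Theory :=
  (LHom.sumInl.onTheory Language.order.dlo) ∪
    Set.range (fun n : ℕ => (Term.lt (cT n) (cT (n + 1)) : EL.Sentence))

section
variable {X : Type*}

/-- The interpretation of `≤` in a structure `S` on `X`. -/
def Ele (S : EL.Structure X) (a b : X) : Prop :=
  @Structure.RelMap EL X S 2 (Sum.inl leSymb) ![a, b]

/-- The interpretation of `<` in a structure `S` on `X`. -/
def Elt (S : EL.Structure X) (a b : X) : Prop := Ele S a b ∧ a ≠ b

/-- The interpretation of the constant `c_n` in a structure `S` on `X`. -/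
def Econ (S : EL.Structure X) (n : ℕ) : X :=
  @Structure.funMap EL X S 0 (Language.order.con n) ![]

/-- `a` realizes the type `p(x) = {c_n < x : n < ω}` in the structure `S`. -/
def RealizesP (S : EL.Structure X) (a : X) : Prop := ∀ n : ℕ, Elt S (Econ S n) a

end

/-! ### Auxiliary constructions -/

/-- The `EL`-structure on a preordered type determined by a choice of constants. -/
def mkStruct (V : Type*) [LE V] (c : ℕ → V) : EL.Structure V :=
  @Language.withConstantsStructure Language.order V (orderStructure V) ℕ (constantsOn.structure c)

theorem mkStruct_model (V : Type*) [LinearOrder V] [DenselyOrdered V] [NoMaxOrder V] [NoMinOrder V]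
    (c : ℕ → V) (hc : ∀ k, c k < c (k + 1)) : @Theory.Model EL V (mkStruct V c) T1 := by
  letI := orderStructure V
  letI := constantsOn.structure c
  letI : EL.Structure V := mkStruct V c
  haveI hord : Language.order.OrderedStructure V := ⟨fun _ => Iff.rfl⟩
  haveI hord2 : @OrderedStructure EL V _ _ (mkStruct V c) := ⟨fun _ => Iff.rfl⟩
  haveI hexp : (LHom.sumInl : Language.order →ᴸ EL).IsExpansionOn V :=
    ⟨fun _ _ => rfl, fun _ _ => rfl⟩
  rw [T1]
  refine Theory.model_union_iff.2 ?_
  constructor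
  · haveI : (LHom.sumInl : Language.order →ᴸ Language.order.sum (constantsOn ℕ)).IsExpansionOn V := hexp
    exact (@LHom.onTheory_model _ _ V _ (mkStruct V c) LHom.sumInl hexp _).2 inferInstance
  · rw [Theory.model_iff]
    rintro φ ⟨n, rfl⟩
    have : ((cT n).lt (cT (n + 1))).Realize (default : Empty → V) (default : Fin 0 → V) := by
      rw [Term.realize_lt]
      exact hc n
    exact this

/-- Transporting a model along a bijection. -/
theorem induced_model {L : Language} {M N : Type*} [L.Structure M] (e : M ≃ N) (T : L.Theory)
    (h : M ⊨ T) : @Theory.Model L N (Equiv.inducedStructure e) T := by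
  letI : L.Structure N := Equiv.inducedStructure e
  haveI := h
  exact StrongHomClass.theory_model (L := L) (M := M) (N := N)
    (F := M ≃[L] N) (T := T) (Equiv.inducedStructureEquiv e)

theorem lex_dense {α β : Type*} [LinearOrder α] [Preorder β] [DenselyOrdered β] [NoMaxOrder β] :
    DenselyOrdered (α ×ₗ β) where
  dense := by
    rintro _ _ (@⟨a₁, b₁, a₂, b₂, h⟩ | @⟨a, b₁, b₂, h⟩)
    · obtain ⟨c, hc⟩ := exists_gt b₁
      exact ⟨toLex (a₁, c), Prod.Lex.right _ hc, Prod.Lex.left _ _ h⟩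
    · obtain ⟨c, h₁, h₂⟩ := exists_between h
      exact ⟨toLex (a, c), Prod.Lex.right _ h₁, Prod.Lex.right _ h₂⟩

/-- The underlying type of the model with the `n`-th interval uncountable. -/
abbrev Vc (X : Type u) : Type u := ℚ ⊕ₗ ((X ×ₗ ℚ) ⊕ₗ ℚ)

/-- The constants of the `m`-th model: `c_0 < ⋯ < c_m` lie below the uncountable part,
the constants `c_k` for `k > m` lie above it. -/
def conV (X : Type u) (m k : ℕ) : Vc X :=
  if k ≤ m then toLex (Sum.inl (k : ℚ)) else toLex (Sum.inr (toLex (Sum.inr (k : ℚ))))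

section
variable (X : Type u) [LinearOrder X]

theorem conV_lt_succ (m k : ℕ) : conV X m k < conV X m (k + 1) := by
  unfold conV
  by_cases h1 : k + 1 ≤ m
  · rw [if_pos (by omega), if_pos h1]
    exact Sum.Lex.inl_lt_inl_iff.2 (by exact_mod_cast Nat.lt_succ_self k)
  · rw [if_neg h1]
    by_cases h2 : k ≤ m
    · rw [if_pos h2]; exact Sum.Lex.inl_lt_inr _ _
    · rw [if_neg h2]
      exact Sum.Lex.inr_lt_inr_iff.2
        (Sum.Lex.inr_lt_inr_iff.2 (by exact_mod_cast Nat.lt_succ_self k))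

/-- The embedding of `X` into the uncountable interval of `Vc X`. -/
def embX (x : X) : Vc X := toLex (Sum.inr (toLex (Sum.inl (toLex (x, (0 : ℚ))))))

omit [LinearOrder X] in
theorem embX_inj : Function.Injective (embX X) := by
  intro a b hab
  simpa [embX, Prod.ext_iff] using hab

theorem embX_mem (m : ℕ) (x : X) :
    conV X m m < embX X x ∧ embX X x < conV X m (m + 1) := by
  unfold conV embX
  rw [if_pos le_rfl, if_neg (by omega)]
  exact ⟨Sum.Lex.inl_lt_inr _ _, Sum.Lex.inr_lt_inr_iff.2 (Sum.Lex.inl_lt_inr _ _)⟩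

theorem countable_interval {m n : ℕ} (hmn : m ≠ n) :
    Countable {v : Vc X | conV X n m < v ∧ v < conV X n (m + 1)} := by
  rcases lt_or_gt_of_ne hmn with h | h
  · have hs : {v : Vc X | conV X n m < v ∧ v < conV X n (m + 1)} ⊆
        Set.range (fun q : ℚ => (toLex (Sum.inl q) : Vc X)) := by
      rintro v ⟨h1, h2⟩
      obtain ⟨v', rfl⟩ := toLex.surjective v
      rcases v' with q | w
      · exact ⟨q, rfl⟩
      · exfalso
        rw [conV, if_pos (by omega : m + 1 ≤ n)] at h2
        exact Sum.Lex.not_inr_lt_inl h2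
    exact ((Set.countable_range _).mono hs).to_subtype
  · have hs : {v : Vc X | conV X n m < v ∧ v < conV X n (m + 1)} ⊆
        Set.range (fun q : ℚ => (toLex (Sum.inr (toLex (Sum.inr q))) : Vc X)) := by
      rintro v ⟨h1, h2⟩
      obtain ⟨v', rfl⟩ := toLex.surjective v
      rw [conV, if_neg (by omega : ¬ m ≤ n)] at h1
      rcases v' with q | w
      · exact absurd h1 Sum.Lex.not_inr_lt_inl
      · obtain ⟨w', rfl⟩ := toLex.surjective w
        rcases w' with d | q
        · exact absurd (Sum.Lex.inr_lt_inr_iff.1 h1) Sum.Lex.not_inr_lt_inl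
        · exact ⟨q, rfl⟩
    exact ((Set.countable_range _).mono hs).to_subtype

end

/-- (ZF) If the Ehrenfeucht theory `T₁` has a model whose universe `X` is uncountable
(not equinumerous with `ω`), then `T₁` has at least `ℵ₀` pairwise non-isomorphic models
with universe `X`. -/
theorem countably_many_nonisomorphic_models (X : Type*)
    (hX : ¬ Nonempty (X ≃ ℕ))
    (h : ∃ S : EL.Structure X, @Theory.Model EL X S T1) :
    ∃ S : ℕ → EL.Structure X,
      (∀ n : ℕ, @Theory.Model EL X (S n) T1) ∧
      ∀ m n : ℕ, m ≠ n → ¬ Nonempty (@Language.Equiv EL X X (S m) (S n)) := by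
  classical
  obtain ⟨S₀, hS₀⟩ := h
  haveI hne : Nonempty X := ⟨Econ S₀ 0⟩
  haveI hinf : Infinite X := by
    letI inst : (Language.order.sum (constantsOn ℕ)).Structure X := S₀
    letI instO : Language.order.Structure X := (LHom.sumInl : Language.order →ᴸ EL).reduct X
    haveI h1 : @Theory.Model EL X inst (LHom.sumInl.onTheory Language.order.dlo) :=
      hS₀.mono Set.subset_union_left
    haveI : X ⊨ Language.order.dlo :=
      (@LHom.onTheory_model Language.order (Language.order.sum (constantsOn ℕ)) X instO inst
        (LHom.sumInl : Language.order →ᴸ Language.order.sum (constantsOn ℕ))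
        (@LHom.isExpansionOn_reduct Language.order (Language.order.sum (constantsOn ℕ))
          LHom.sumInl X inst) Language.order.dlo).1 h1
    infer_instance
  clear hS₀ S₀
  letI : LinearOrder X := IsWellOrder.linearOrder WellOrderingRel
  haveI : DenselyOrdered (X ×ₗ ℚ) := lex_dense
  -- a bijection between `Vc X` and `X`
  have hcard : Cardinal.mk (Vc X) = Cardinal.mk X := by
    have e : Vc X ≃ (ℚ ⊕ ((X × ℚ) ⊕ ℚ)) :=
      ofLex.trans (Equiv.sumCongr (Equiv.refl ℚ)
        (ofLex.trans (Equiv.sumCongr ofLex (Equiv.refl ℚ))))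
    rw [Cardinal.mk_congr e]
    have hX0 : Cardinal.aleph0 ≤ Cardinal.mk X := Cardinal.infinite_iff.1 inferInstance
    simp only [Cardinal.mk_sum, Cardinal.mk_prod, Cardinal.mk_denumerable,
      Cardinal.lift_aleph0, Cardinal.lift_id, Cardinal.lift_uzero]
    rw [Cardinal.mul_eq_left hX0 hX0 Cardinal.aleph0_ne_zero,
      Cardinal.add_eq_left hX0 hX0, Cardinal.add_eq_right hX0 hX0]
  obtain ⟨e0⟩ := Cardinal.eq.1 hcard
  -- the models
  refine ⟨fun n => @Equiv.inducedStructure EL (Vc X) X (mkStruct (Vc X) (conV X n)) e0,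
    fun n => ?_, fun m n hmn hgne => ?_⟩
  · letI := mkStruct (Vc X) (conV X n)
    exact induced_model e0 T1 (mkStruct_model (Vc X) (conV X n) (conV_lt_succ X n))
  · obtain ⟨g⟩ := hgne
    set Sf : ℕ → EL.Structure X :=
      fun p => @Equiv.inducedStructure EL (Vc X) X (mkStruct (Vc X) (conV X p)) e0 with hSf
    have hEcon : ∀ (p k : ℕ), Econ (Sf p) k = e0 (conV X p k) := fun p k => rfl
    have hEle : ∀ (p : ℕ) (a b : X), Ele (Sf p) a b ↔ e0.symm a ≤ e0.symm b :=
      fun p a b => Iff.rfl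
    have hElt : ∀ (p : ℕ) (a b : X), Elt (Sf p) a b ↔ e0.symm a < e0.symm b := by
      intro p a b
      rw [Elt, hEle, lt_iff_le_and_ne]
      exact and_congr_right (fun _ => (not_iff_not.2 e0.symm.injective.eq_iff).symm)
    have ginj : Function.Injective (g : X → X) := @Language.Equiv.injective EL X X (Sf m) (Sf n) g
    have hg_con : ∀ k : ℕ, g (Econ (Sf m) k) = Econ (Sf n) k := by
      intro k
      have hmap := @Language.Equiv.map_fun EL X X (Sf m) (Sf n) g 0
        (Language.order.con k) ![]
      rw [Subsingleton.elim ((g : X → X) ∘ ![]) (![] : Fin 0 → X)] at hmap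
      exact hmap
    have hg_rel : ∀ a b : X, Elt (Sf m) a b → Elt (Sf n) (g a) (g b) := by
      intro a b hab
      refine ⟨?_, fun hgab => hab.2 (ginj hgab)⟩
      have hmap := @Language.Equiv.map_rel EL X X (Sf m) (Sf n) g 2 (Sum.inl leSymb) ![a, b]
      have hcomp : (g : X → X) ∘ ![a, b] = ![g a, g b] := by
        funext i; fin_cases i <;> rfl
      rw [hcomp] at hmap
      exact hmap.2 hab.1
    -- the injection from `X` into a countable set
    haveI hcnt := countable_interval X hmn
    have hF : ∀ x : X, conV X n m < e0.symm (g (e0 (embX X x))) ∧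
        e0.symm (g (e0 (embX X x))) < conV X n (m + 1) := by
      intro x
      have h1 : Elt (Sf m) (Econ (Sf m) m) (e0 (embX X x)) := by
        rw [hElt, hEcon]
        simpa using (embX_mem X m x).1
      have h2 : Elt (Sf m) (e0 (embX X x)) (Econ (Sf m) (m + 1)) := by
        rw [hElt, hEcon]
        simpa using (embX_mem X m x).2
      have h1' := hg_rel _ _ h1
      have h2' := hg_rel _ _ h2
      rw [hg_con] at h1' h2'
      rw [hElt, hEcon] at h1' h2'
      simp only [Equiv.symm_apply_apply] at h1' h2'
      exact ⟨h1', h2'⟩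
    have hFinj : Function.Injective
        (fun x : X => (⟨e0.symm (g (e0 (embX X x))), hF x⟩ :
          {v : Vc X | conV X n m < v ∧ v < conV X n (m + 1)})) := by
      intro a b hab
      simp only [Subtype.mk.injEq] at hab
      exact embX_inj X (e0.injective (ginj (e0.symm.injective hab)))
    haveI : Countable X := hFinj.countable
    exact hX ⟨nonempty_equiv_of_countable.some⟩
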